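/- Let K, N > 0 and a, b ∈ ℤ with m = a*N − b*K > 0, and let 𝓛 be a (K,N)-periodic lattice path with 𝓛 ≤ 𝓛[a,b]. Then for every (x,y) ∈ ℤ² there exists a unique r ∈ ℤ such that (x − r*a, y + r*b) ∈ Δ'(𝓛). -/

import Mathlib

/-- A `(K,N)`-periodic lattice path. -/
def IsLP (K N : ℤ) (L : ℤ → ℤ) : Prop :=
  Antitone L ∧ ∀ y : ℤ, L (y + N) = L y - K

/-- The shifted path `L[a,b] : y ↦ L(y+b) + a`. -/
def LPshift (a b : ℤ) (L : ℤ → ℤ) : ℤ → ℤ := fun y => L (y + b) + a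

/-- The extended fundamental domain `Δ'(L) = {(x,y) : L y ≤ x < L(y+b) + a}`. -/
def DeltaP (a b : ℤ) (L : ℤ → ℤ) : Set (ℤ × ℤ) :=
  {p : ℤ × ℤ | L p.2 ≤ p.1 ∧ p.1 < LPshift a b L p.2}

lemma LP_period (K N : ℤ) (L : ℤ → ℤ) (hL : IsLP K N L) :
    ∀ t z : ℤ, L (z + t * N) = L z - t * K := by
  intro t
  induction t using Int.induction_on with
  | zero => simp
  | succ k ih =>
    intro z
    have := hL.2 (z + k * N)
    have e : z + (k + 1 : ℤ) * N = z + k * N + N := by ring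
    rw [e, this, ih]
    ring
  | pred k ih =>
    intro z
    have := hL.2 (z + (-k - 1 : ℤ) * N)
    have e : z + (-k - 1 : ℤ) * N + N = z + (-k : ℤ) * N := by ring
    rw [e] at this
    have h2 := ih z
    have e3 : (-(k:ℤ) - 1) * K = -(k:ℤ) * K - K := by ring
    linarith [this, h2, e3]

/-- For every `(x,y) ∈ ℤ²` there is a unique `r ∈ ℤ` such that
`(x − r*a, y + r*b) ∈ Δ'(L)`. -/
theorem unique_shift_into_DeltaP (K N a b : ℤ) (hK : 0 < K) (hN : 0 < N)
    (hm : 0 < a * N - b * K)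
    (L : ℤ → ℤ) (hL : IsLP K N L) (hle : ∀ y : ℤ, L y ≤ LPshift a b L y)
    (x y : ℤ) :
    ∃! r : ℤ, (x - r * a, y + r * b) ∈ DeltaP a b L := by
  classical
  set m := a * N - b * K with hmdef
  set g : ℤ → ℤ := fun r => L (y + r * b) + r * a - x with hg
  -- g is monotone
  have hstep : ∀ r : ℤ, g r ≤ g (r + 1) := by
    intro r
    have h1 := hle (y + r * b)
    simp only [LPshift] at h1
    have e : y + (r + 1) * b = y + r * b + b := by ring
    simp only [hg, e]
    nlinarith [h1]
  have hmono : Monotone g := monotone_int_of_le_succ hstep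
  -- shift formula
  have hshift : ∀ r k : ℤ, g (r + k * N) = g r + k * m := by
    intro r k
    have e : y + (r + k * N) * b = y + r * b + (k * b) * N := by ring
    simp only [hg, e, LP_period K N L hL (k * b) (y + r * b)]
    ring
  -- membership characterization
  have hmem : ∀ r : ℤ, ((x - r * a, y + r * b) ∈ DeltaP a b L) ↔ (g r ≤ 0 ∧ 0 < g (r + 1)) := by
    intro r
    have e : y + (r + 1) * b = y + r * b + b := by ring
    simp only [DeltaP, LPshift, Set.mem_setOf_eq, hg, e]
    constructor
    · rintro ⟨h1, h2⟩; constructor <;> nlinarith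
    · rintro ⟨h1, h2⟩; constructor <;> nlinarith
  -- the predicate
  set P : ℤ → Prop := fun r => 0 < g (r + 1) with hP
  -- nonempty
  have hm1 : 1 ≤ m := hm
  have hne : ∃ r : ℤ, P r := by
    refine ⟨(|g 1| + 1) * N, ?_⟩
    have := hshift 1 (|g 1| + 1)
    have habs : -(|g 1|) ≤ g 1 := neg_abs_le _
    have e : (|g 1| + 1) * N + 1 = 1 + (|g 1| + 1) * N := by ring
    simp only [hP, e, this]
    nlinarith [abs_nonneg (g 1)]
  -- bounded below
  have hbdd : ∃ lo : ℤ, ∀ r : ℤ, P r → lo ≤ r := by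
    refine ⟨-(|g 0| + 1) * N, ?_⟩
    intro r hr
    by_contra hc
    push_neg at hc
    have h1 : r + 1 ≤ -(|g 0| + 1) * N := by omega
    have h2 : g (r + 1) ≤ g (-(|g 0| + 1) * N) := hmono h1
    have h3 : g (0 + -(|g 0| + 1) * N) = g 0 + -(|g 0| + 1) * m := hshift 0 (-(|g 0| + 1))
    have habs : g 0 ≤ |g 0| := le_abs_self _
    simp only [zero_add] at h3
    rw [h3] at h2
    have : -(|g 0| + 1) * m ≤ -(|g 0| + 1) := by nlinarith [abs_nonneg (g 0)]
    simp only [hP] at hr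
    omega
  obtain ⟨lb, hlb, hleast⟩ := Int.exists_least_of_bdd (by obtain ⟨lo, h⟩ := hbdd; exact ⟨lo, h⟩) hne
  have hg0 : g lb ≤ 0 := by
    by_contra hc
    push_neg at hc
    have : P (lb - 1) := by simp only [hP]; simpa using hc
    have := hleast _ this
    omega
  refine ⟨lb, (hmem lb).2 ⟨hg0, hlb⟩, ?_⟩
  · intro s hs
    rw [hmem] at hs
    have h1 : lb ≤ s := hleast s hs.2
    by_contra hne'
    have h2 : lb + 1 ≤ s := by omega
    have := hmono h2
    simp only [hP] at hlb
    omega
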